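/- Let b,ℓ ≥ 1 be integers and let x, z ∈ {0,…,s−1}^ℓ be such that z_k − x_k is even for every coordinate k. Then every walk from v_{0,x} to v_{2ℓ,z} in H_{b,ℓ} that uses exactly 2ℓ edges has weighted length at least 2ℓ·A + (1/2)·∑_{k=1}^{ℓ} (z_k − x_k)², and exactly one such walk attains this value, namely the walk whose step from level i to level i+1 changes coordinate c(i) by exactly (z_{c(i)} − x_{c(i)})/2 (in particular this walk passes through v_{ℓ,(x+z)/2}). -/

import Mathlib

/-- The vertex set of the graph `H_{b,ℓ}`: levels `0,…,2ℓ`, each a copy of `{0,…,2^b-1}^ℓ`. -/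
abbrev HVert (b ℓ : ℕ) := Fin (2 * ℓ + 1) × (Fin ℓ → Fin (2 ^ b))

/-- The (0-indexed) coordinate `c(i)` that may change on a step from level `i` to `i+1`. -/
def cidx (ℓ i : ℕ) : ℕ := if i < ℓ then i else 2 * ℓ - 1 - i

/-- `u` is one level below `v` and their coordinate vectors agree outside coordinate
`c(level of u)`. -/
def HStep {b ℓ : ℕ} (u v : HVert b ℓ) : Prop :=
  (u.1 : ℕ) + 1 = (v.1 : ℕ) ∧ ∀ k : Fin ℓ, (k : ℕ) ≠ cidx ℓ (u.1 : ℕ) → u.2 k = v.2 k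

/-- The graph `H_{b,ℓ}`. -/
def HGraph (b ℓ : ℕ) : SimpleGraph (HVert b ℓ) where
  Adj u v := HStep u v ∨ HStep v u
  symm := ⟨fun _ _ h => h.symm⟩
  loopless := by
    constructor
    intro u h
    rcases h with h | h <;> exact absurd h.1 (by omega)

/-- The weight of an edge of `H_{b,ℓ}`: `A + (difference at the changing coordinate)²`,
where `A = 3ℓs²`, `s = 2^b`.  (For adjacent vertices all other coordinates agree, so the
sum below has a single nonzero term.) -/
def HWeight {b ℓ : ℕ} (u v : HVert b ℓ) : ℕ :=
  3 * ℓ * (2 ^ b) ^ 2 + ∑ k : Fin ℓ, (((u.2 k : ℤ) - ((v.2 k : ℕ) : ℤ)).natAbs) ^ 2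

/-- The weighted length of a walk in `H_{b,ℓ}`: the sum of the weights of its edges. -/
def hwlen {b ℓ : ℕ} {u v : HVert b ℓ} (p : (HGraph b ℓ).Walk u v) : ℕ :=
  (p.darts.map (fun d => HWeight d.toProd.1 d.toProd.2)).sum

/-- The weighted distance in `H_{b,ℓ}`: the minimum weighted length of a walk. -/
noncomputable def hwdist (b ℓ : ℕ) (u v : HVert b ℓ) : ℕ :=
  sInf {L : ℕ | ∃ p : (HGraph b ℓ).Walk u v, hwlen p = L}

/-- The coordinatewise midpoint `(x+z)/2`. -/
def midVec {b ℓ : ℕ} (x z : Fin ℓ → Fin (2 ^ b)) : Fin ℓ → Fin (2 ^ b) :=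
  fun k => ⟨((x k : ℕ) + (z k : ℕ)) / 2, by
    have hx := (x k).isLt
    have hz := (z k).isLt
    omega⟩

/-- The position, at level `i`, of the canonical walk from `v_{0,x}` to `v_{2ℓ,z}` that at
every step from level `i` to level `i+1` changes coordinate `c(i)` by exactly
`(z_{c(i)} - x_{c(i)})/2`: coordinates already treated carry the midpoint value. -/
def posVec {b ℓ : ℕ} (x z : Fin ℓ → Fin (2 ^ b)) (i : Fin (2 * ℓ + 1)) :
    Fin ℓ → Fin (2 ^ b) :=
  fun k => if (k : ℕ) < min (i : ℕ) (2 * ℓ - (i : ℕ)) then midVec x z k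
    else if (i : ℕ) ≤ ℓ then x k else z k

open SimpleGraph

section Aux
variable {b ℓ : ℕ}

lemma adj_level {u v : HVert b ℓ} (h : (HGraph b ℓ).Adj u v) :
    (u.1 : ℕ) + 1 = (v.1 : ℕ) ∨ (v.1 : ℕ) + 1 = (u.1 : ℕ) := by
  rcases (h : HStep u v ∨ HStep v u) with h | h
  · exact Or.inl h.1
  · exact Or.inr h.1

lemma walk_levels {u v : HVert b ℓ} (hu1 : (u.1 : ℕ) = 0) (hv1 : (v.1 : ℕ) = 2 * ℓ)
    (p : (HGraph b ℓ).Walk u v) (hlen : p.length = 2 * ℓ) :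
    ∀ t, t ≤ 2 * ℓ → ((p.getVert t).1 : ℕ) = t := by
  have up : ∀ s : ℕ, ((p.getVert s).1 : ℕ) ≤ s := by
    intro s
    induction s with
    | zero => simp [Walk.getVert_zero, hu1]
    | succ n ih =>
      by_cases hn : n < p.length
      · have := adj_level (p.adj_getVert_succ hn)
        omega
      · rw [p.getVert_of_length_le (by omega)]
        rw [p.getVert_of_length_le (le_of_not_gt hn)] at ih
        omega
  have down : ∀ d : ℕ, 2 * ℓ - d ≤ ((p.getVert (2 * ℓ - d)).1 : ℕ) := by
    intro d
    induction d with
    | zero =>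
      simp only [Nat.sub_zero]
      have : p.getVert (2 * ℓ) = v := by rw [← hlen]; exact p.getVert_length
      rw [this, hv1]
    | succ n ih =>
      by_cases h2 : 2 * ℓ ≤ n
      · have : 2 * ℓ - (n + 1) = 0 := by omega
        simp [this]
      · have ht' : 2 * ℓ - (n + 1) < p.length := by omega
        have hstep := adj_level (p.adj_getVert_succ ht')
        have heq : 2 * ℓ - (n + 1) + 1 = 2 * ℓ - n := by omega
        rw [heq] at hstep
        omega
  intro t ht
  have h1 := up t
  have h2 := down (2 * ℓ - t)
  rw [show 2 * ℓ - (2 * ℓ - t) = t by omega] at h2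
  omega

lemma walk_step {u v : HVert b ℓ} (hu1 : (u.1 : ℕ) = 0) (hv1 : (v.1 : ℕ) = 2 * ℓ)
    (p : (HGraph b ℓ).Walk u v) (hlen : p.length = 2 * ℓ) :
    ∀ t, t < 2 * ℓ → HStep (p.getVert t) (p.getVert (t + 1)) := by
  intro t ht
  have hadj := p.adj_getVert_succ (by omega : t < p.length)
  rcases (hadj : HStep _ _ ∨ HStep _ _) with h | h
  · exact h
  · exfalso
    have l1 := walk_levels hu1 hv1 p hlen t (by omega)
    have l2 := walk_levels hu1 hv1 p hlen (t + 1) (by omega)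
    have := h.1
    omega

lemma walk_coord {u v : HVert b ℓ} (hu1 : (u.1 : ℕ) = 0) (hv1 : (v.1 : ℕ) = 2 * ℓ)
    (p : (HGraph b ℓ).Walk u v) (hlen : p.length = 2 * ℓ) {t : ℕ} (ht : t < 2 * ℓ)
    {k : Fin ℓ} (hk : (k : ℕ) ≠ cidx ℓ t) :
    (p.getVert t).2 k = (p.getVert (t + 1)).2 k := by
  have hs := walk_step hu1 hv1 p hlen t ht
  exact hs.2 k (by rw [walk_levels hu1 hv1 p hlen t (by omega)]; exact hk)

lemma cidx_eq_iff {k t : ℕ} (hk : k < ℓ) (ht : t < 2 * ℓ) :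
    k = cidx ℓ t ↔ (t = k ∨ t = 2 * ℓ - 1 - k) := by
  simp only [cidx]
  split <;> omega

lemma coord_const {u v : HVert b ℓ} (hu1 : (u.1 : ℕ) = 0) (hv1 : (v.1 : ℕ) = 2 * ℓ)
    (p : (HGraph b ℓ).Walk u v) (hlen : p.length = 2 * ℓ) (k : Fin ℓ) (a c : ℕ) (hac : a ≤ c) :
    c ≤ 2 * ℓ → (∀ t, a ≤ t → t < c → (k : ℕ) ≠ cidx ℓ t) →
      (p.getVert a).2 k = (p.getVert c).2 k := by
  induction c, hac using Nat.le_induction with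
  | base => intro _ _; rfl
  | succ n hn ih =>
    intro hc2 hfree
    have h1 := ih (by omega) (fun t h1 h2 => hfree t h1 (by omega))
    rw [h1]
    exact walk_coord hu1 hv1 p hlen (by omega) (hfree n hn (by omega))

lemma hwlen_eq_sum {u v : HVert b ℓ} (p : (HGraph b ℓ).Walk u v) :
    hwlen p = ∑ t ∈ Finset.range p.length, HWeight (p.getVert t) (p.getVert (t + 1)) := by
  induction p with
  | nil => simp [hwlen]
  | @cons u' a v' h q ih =>
    have h0 : hwlen (Walk.cons h q) = HWeight u' a + hwlen q := by simp [hwlen]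
    rw [h0, ih, Walk.length_cons, Finset.sum_range_succ']
    simp only [Walk.getVert_cons_succ, Walk.getVert_zero]
    rw [add_comm]

def cdiff {u v : HVert b ℓ} (p : (HGraph b ℓ).Walk u v) (k : Fin ℓ) (t : ℕ) : ℤ :=
  (((p.getVert (t + 1)).2 k : ℕ) : ℤ) - (((p.getVert t).2 k : ℕ) : ℤ)

end Aux

section Aux2
variable {b ℓ : ℕ}

lemma hwlen_decomp {u v : HVert b ℓ} (hu1 : (u.1 : ℕ) = 0) (hv1 : (v.1 : ℕ) = 2 * ℓ)
    (p : (HGraph b ℓ).Walk u v) (hlen : p.length = 2 * ℓ) :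
    hwlen p = 2 * ℓ * (3 * ℓ * (2 ^ b) ^ 2) +
      ∑ k : Fin ℓ, ((cdiff p k (k : ℕ)).natAbs ^ 2 + (cdiff p k (2 * ℓ - 1 - (k : ℕ))).natAbs ^ 2) := by
  rw [hwlen_eq_sum, hlen]
  simp only [HWeight]
  rw [Finset.sum_add_distrib]
  congr 1
  · simp [Finset.sum_const, Finset.card_range, mul_comm]
  rw [Finset.sum_comm]
  refine Finset.sum_congr rfl ?_
  intro k _
  have hk := k.isLt
  have hsub : ({(k : ℕ), 2 * ℓ - 1 - (k : ℕ)} : Finset ℕ) ⊆ Finset.range (2 * ℓ) := by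
    intro t htm
    simp only [Finset.mem_insert, Finset.mem_singleton] at htm
    simp only [Finset.mem_range]
    omega
  rw [← Finset.sum_subset hsub ?_]
  · rw [Finset.sum_pair (by omega : (k : ℕ) ≠ 2 * ℓ - 1 - (k : ℕ))]
    simp only [cdiff]
    have hcomm : ∀ a c : ℤ, (a - c).natAbs = (c - a).natAbs := by
      intro a c; rw [← Int.natAbs_neg, neg_sub]
    rw [hcomm, hcomm ((((p.getVert (2 * ℓ - 1 - (k:ℕ) + 1)).2 k : ℕ)) : ℤ)]
  · intro t htr hts
    simp only [Finset.mem_range] at htr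
    simp only [Finset.mem_insert, Finset.mem_singleton, not_or] at hts
    have hne : (k : ℕ) ≠ cidx ℓ t := by
      intro hEq
      rw [cidx_eq_iff hk htr] at hEq
      omega
    rw [walk_coord hu1 hv1 p hlen htr hne]
    simp

lemma cdiff_total {u v : HVert b ℓ} (hu1 : (u.1 : ℕ) = 0) (hv1 : (v.1 : ℕ) = 2 * ℓ)
    (p : (HGraph b ℓ).Walk u v) (hlen : p.length = 2 * ℓ) (k : Fin ℓ) :
    cdiff p k (k : ℕ) + cdiff p k (2 * ℓ - 1 - (k : ℕ)) = ((v.2 k : ℕ) : ℤ) - ((u.2 k : ℕ) : ℤ) := by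
  have hk := k.isLt
  have e1 : (p.getVert 0).2 k = (p.getVert (k : ℕ)).2 k := by
    refine coord_const hu1 hv1 p hlen k 0 (k : ℕ) (by omega) (by omega) ?_
    intro t h1 h2 hEq
    rw [cidx_eq_iff hk (by omega)] at hEq
    omega
  have e2 : (p.getVert ((k : ℕ) + 1)).2 k = (p.getVert (2 * ℓ - 1 - (k : ℕ))).2 k := by
    refine coord_const hu1 hv1 p hlen k ((k : ℕ) + 1) (2 * ℓ - 1 - (k : ℕ)) (by omega) (by omega) ?_
    intro t h1 h2 hEq
    rw [cidx_eq_iff hk (by omega)] at hEq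
    omega
  have e3 : (p.getVert (2 * ℓ - (k : ℕ))).2 k = (p.getVert (2 * ℓ)).2 k := by
    refine coord_const hu1 hv1 p hlen k (2 * ℓ - (k : ℕ)) (2 * ℓ) (by omega) (by omega) ?_
    intro t h1 h2 hEq
    rw [cidx_eq_iff hk (by omega)] at hEq
    omega
  have h0 : p.getVert 0 = u := p.getVert_zero
  have hN : p.getVert (2 * ℓ) = v := by rw [← hlen]; exact p.getVert_length
  have hfix : 2 * ℓ - 1 - (k : ℕ) + 1 = 2 * ℓ - (k : ℕ) := by omega
  simp only [cdiff, hfix]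
  rw [← e1, ← e2, e3, h0, hN]
  ring

lemma sq_ineq (d1 d2 : ℤ) : (d1 + d2).natAbs ^ 2 ≤ 2 * (d1.natAbs ^ 2 + d2.natAbs ^ 2) := by
  have h : ((d1 + d2).natAbs ^ 2 : ℤ) ≤ ((2 * (d1.natAbs ^ 2 + d2.natAbs ^ 2) : ℕ) : ℤ) := by
    push_cast
    simp only [sq_abs]
    nlinarith [sq_nonneg (d1 - d2)]
  exact_mod_cast h

lemma sq_eq {d1 d2 : ℤ} (h : (d1 + d2).natAbs ^ 2 = 2 * (d1.natAbs ^ 2 + d2.natAbs ^ 2)) :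
    d1 = d2 := by
  have h' : ((d1 + d2).natAbs ^ 2 : ℤ) = ((2 * (d1.natAbs ^ 2 + d2.natAbs ^ 2) : ℕ) : ℤ) := by
    exact_mod_cast h
  push_cast at h'
  simp only [sq_abs] at h'
  have : (d1 - d2) ^ 2 = 0 := by nlinarith
  have := pow_eq_zero_iff (two_ne_zero) |>.mp this
  omega

end Aux2

section Aux3
open SimpleGraph
variable {V : Type*} {G : SimpleGraph V}

def buildW (G : SimpleGraph V) : ∀ (n : ℕ) (f : ℕ → V), (∀ t, t < n → G.Adj (f t) (f (t + 1))) →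
    G.Walk (f 0) (f n)
  | 0, _, _ => SimpleGraph.Walk.nil
  | n + 1, f, h =>
    SimpleGraph.Walk.cons (h 0 n.succ_pos)
      (buildW G n (fun t => f (t + 1)) (fun t ht => h (t + 1) (Nat.succ_lt_succ ht)))

lemma buildW_length : ∀ (n : ℕ) (f : ℕ → V) (h : ∀ t, t < n → G.Adj (f t) (f (t + 1))),
    (buildW G n f h).length = n
  | 0, _, _ => rfl
  | n + 1, f, h => by
    simpa [buildW] using buildW_length n (fun t => f (t + 1)) _

lemma buildW_getVert : ∀ (n : ℕ) (f : ℕ → V) (h : ∀ t, t < n → G.Adj (f t) (f (t + 1))) (t : ℕ),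
    (buildW G n f h).getVert t = f (min t n)
  | 0, f, h, t => by
    simp [buildW, Walk.getVert]
  | n + 1, f, h, 0 => by
    simp [buildW, Walk.getVert]
  | n + 1, f, h, t + 1 => by
    have := buildW_getVert n (fun s => f (s + 1)) (fun s hs => h (s + 1) (Nat.succ_lt_succ hs)) t
    simp only [buildW, Walk.getVert_cons_succ, this]
    congr 1
    omega

lemma walk_ext {u v : V} (p : G.Walk u v) :
    ∀ (q : G.Walk u v), p.length = q.length → (∀ t, p.getVert t = q.getVert t) → p = q := by
  induction p with
  | nil =>
    intro q hl _
    have : q.length = 0 := by simpa using hl.symm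
    exact (SimpleGraph.Walk.nil_iff_eq_nil.mp (SimpleGraph.Walk.length_eq_zero_iff.mp this)).symm
  | @cons a c d hadj p' ih =>
    intro q hl h
    cases q with
    | nil => simp at hl
    | @cons _ e _ hadj' q' =>
      have h2 : c = e := by
        have := h 1
        rwa [Walk.getVert_cons_succ, Walk.getVert_cons_succ, Walk.getVert_zero,
          Walk.getVert_zero] at this
      subst h2
      have hpq : p' = q' := ih q' (by simpa using hl) (fun t => by
        have := h (t + 1)
        rwa [Walk.getVert_cons_succ, Walk.getVert_cons_succ] at this)
      rw [hpq]

end Aux3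

section Aux4
open SimpleGraph
variable {b ℓ : ℕ} (x z : Fin ℓ → Fin (2 ^ b))

def canonFin (ℓ : ℕ) (t : ℕ) : Fin (2 * ℓ + 1) := ⟨min t (2 * ℓ), by omega⟩

def canonF (x z : Fin ℓ → Fin (2 ^ b)) (t : ℕ) : HVert b ℓ :=
  (canonFin ℓ t, posVec x z (canonFin ℓ t))

lemma canonF_min (t : ℕ) : canonF x z (min t (2 * ℓ)) = canonF x z t := by
  unfold canonF
  rw [show canonFin ℓ (min t (2 * ℓ)) = canonFin ℓ t from Fin.ext (by simp [canonFin])]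

lemma canonF_fst (t : ℕ) : ((canonF x z t).1 : ℕ) = min t (2 * ℓ) := rfl

lemma canonF_snd (t : ℕ) (ht : t ≤ 2 * ℓ) (k : Fin ℓ) :
    (canonF x z t).2 k =
      if (k : ℕ) < min t (2 * ℓ - t) then midVec x z k else if t ≤ ℓ then x k else z k := by
  have hm : min t (2 * ℓ) = t := by omega
  show posVec x z (canonFin ℓ t) k = _
  unfold posVec canonFin
  simp only [hm]

lemma canonF_adj (hℓ : 1 ≤ ℓ) (t : ℕ) (ht : t < 2 * ℓ) :
    (HGraph b ℓ).Adj (canonF x z t) (canonF x z (t + 1)) := by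
  refine Or.inl ?_
  constructor
  · show min t (2 * ℓ) + 1 = min (t + 1) (2 * ℓ)
    omega
  · intro k hk
    have hkl := k.isLt
    rw [canonF_fst] at hk
    have hm : min t (2 * ℓ) = t := by omega
    rw [hm] at hk
    simp only [cidx] at hk
    rw [canonF_snd x z t (by omega) k, canonF_snd x z (t + 1) (by omega) k]
    split_ifs at hk ⊢ <;> first | rfl | (exfalso; omega)

lemma canonF_zero (hℓ : 1 ≤ ℓ) : canonF x z 0 = ((⟨0, by omega⟩ : Fin (2 * ℓ + 1)), x) := by
  refine Prod.ext (Fin.ext ?_) ?_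
  · show min 0 (2 * ℓ) = 0
    omega
  · funext k
    rw [show ((⟨0, by omega⟩ : Fin (2 * ℓ + 1)), x).2 = x from rfl]
    rw [canonF_snd x z 0 (by omega) k, if_neg (by omega), if_pos (by omega)]

lemma canonF_last (hℓ : 1 ≤ ℓ) :
    canonF x z (2 * ℓ) = ((⟨2 * ℓ, by omega⟩ : Fin (2 * ℓ + 1)), z) := by
  refine Prod.ext (Fin.ext ?_) ?_
  · show min (2 * ℓ) (2 * ℓ) = 2 * ℓ
    omega
  · funext k
    rw [show ((⟨2 * ℓ, by omega⟩ : Fin (2 * ℓ + 1)), z).2 = z from rfl]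
    rw [canonF_snd x z (2 * ℓ) (by omega) k, if_neg (by omega), if_neg (by omega)]

lemma canonF_coe (i : Fin (2 * ℓ + 1)) : canonF x z (i : ℕ) = (i, posVec x z i) := by
  unfold canonF
  rw [show canonFin ℓ (i : ℕ) = i from Fin.ext (by simp [canonFin]; omega)]

lemma posVec_mid (hℓ : 1 ≤ ℓ) : posVec x z ⟨ℓ, by omega⟩ = midVec x z := by
  funext k
  have hkl := k.isLt
  unfold posVec
  rw [if_pos (by simp; omega)]

lemma canonF_mid (hℓ : 1 ≤ ℓ) :
    canonF x z ℓ = ((⟨ℓ, by omega⟩ : Fin (2 * ℓ + 1)), midVec x z) := by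
  have h1 : canonFin ℓ ℓ = ⟨ℓ, by omega⟩ := Fin.ext (by show min ℓ (2 * ℓ) = ℓ; omega)
  unfold canonF
  rw [h1, posVec_mid x z hℓ]

lemma two_mul_mid (k : Fin ℓ) (h2 : (2 : ℤ) ∣ ((z k : ℤ) - (x k : ℤ))) :
    2 * ((midVec x z k : ℕ) : ℤ) = ((x k : ℕ) : ℤ) + ((z k : ℕ) : ℤ) := by
  obtain ⟨c, hc⟩ := h2
  have hm : (midVec x z k : ℕ) = ((x k : ℕ) + (z k : ℕ)) / 2 := rfl
  omega

end Aux4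

section Aux5
open SimpleGraph
variable {b ℓ : ℕ} (x z : Fin ℓ → Fin (2 ^ b))

lemma canonW (hℓ : 1 ≤ ℓ) :
    ∃ p0 : (HGraph b ℓ).Walk ((⟨0, by omega⟩ : Fin (2 * ℓ + 1)), x)
        ((⟨2 * ℓ, by omega⟩ : Fin (2 * ℓ + 1)), z),
      p0.length = 2 * ℓ ∧ ∀ t, t ≤ 2 * ℓ → p0.getVert t = canonF x z t := by
  refine ⟨(buildW (HGraph b ℓ) (2 * ℓ) (canonF x z) (fun t ht => canonF_adj x z hℓ t ht)).copy
      (canonF_zero x z hℓ) (canonF_last x z hℓ), ?_, ?_⟩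
  · rw [Walk.length_copy, buildW_length]
  · intro t _
    rw [Walk.getVert_copy, buildW_getVert]
    exact canonF_min x z t

lemma canon_hwlen (hℓ : 1 ≤ ℓ) (heven : ∀ k : Fin ℓ, (2 : ℤ) ∣ ((z k : ℤ) - (x k : ℤ)))
    (p0 : (HGraph b ℓ).Walk ((⟨0, by omega⟩ : Fin (2 * ℓ + 1)), x)
      ((⟨2 * ℓ, by omega⟩ : Fin (2 * ℓ + 1)), z))
    (hlen0 : p0.length = 2 * ℓ) (hgv' : ∀ t, t ≤ 2 * ℓ → p0.getVert t = canonF x z t) :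
    2 * hwlen p0 = 2 * (2 * ℓ * (3 * ℓ * (2 ^ b) ^ 2)) +
      ∑ k : Fin ℓ, (((z k : ℕ) : ℤ) - ((x k : ℕ) : ℤ)).natAbs ^ 2 := by
  have hck1 : ∀ k : Fin ℓ, cdiff p0 k (k : ℕ) =
      ((midVec x z k : ℕ) : ℤ) - ((x k : ℕ) : ℤ) := by
    intro k
    have hkl := k.isLt
    show (((p0.getVert ((k : ℕ) + 1)).2 k : ℕ) : ℤ) - (((p0.getVert (k : ℕ)).2 k : ℕ) : ℤ) = _
    rw [hgv' ((k : ℕ) + 1) (by omega), hgv' (k : ℕ) (by omega),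
      canonF_snd x z _ (by omega) k, canonF_snd x z _ (by omega) k,
      if_pos (by omega), if_neg (by omega), if_pos (by omega)]
  have hck2 : ∀ k : Fin ℓ, cdiff p0 k (2 * ℓ - 1 - (k : ℕ)) =
      ((z k : ℕ) : ℤ) - ((midVec x z k : ℕ) : ℤ) := by
    intro k
    have hkl := k.isLt
    show (((p0.getVert (2 * ℓ - 1 - (k : ℕ) + 1)).2 k : ℕ) : ℤ) -
        (((p0.getVert (2 * ℓ - 1 - (k : ℕ))).2 k : ℕ) : ℤ) = _
    rw [show 2 * ℓ - 1 - (k : ℕ) + 1 = 2 * ℓ - (k : ℕ) by omega]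
    rw [hgv' (2 * ℓ - (k : ℕ)) (by omega), hgv' (2 * ℓ - 1 - (k : ℕ)) (by omega),
      canonF_snd x z _ (by omega) k, canonF_snd x z _ (by omega) k,
      if_neg (by omega), if_neg (by omega), if_pos (by omega)]
  have hS20 : 2 * (∑ k : Fin ℓ, ((cdiff p0 k (k : ℕ)).natAbs ^ 2 +
      (cdiff p0 k (2 * ℓ - 1 - (k : ℕ))).natAbs ^ 2)) =
      ∑ k : Fin ℓ, (((z k : ℕ) : ℤ) - ((x k : ℕ) : ℤ)).natAbs ^ 2 := by
    rw [Finset.mul_sum]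
    refine Finset.sum_congr rfl fun k _ => ?_
    have hMk := two_mul_mid x z k (heven k)
    rw [hck1 k, hck2 k]
    have e1 : ((z k : ℕ) : ℤ) - ((midVec x z k : ℕ) : ℤ) =
        ((midVec x z k : ℕ) : ℤ) - ((x k : ℕ) : ℤ) := by omega
    have e2 : ((z k : ℕ) : ℤ) - ((x k : ℕ) : ℤ) =
        2 * (((midVec x z k : ℕ) : ℤ) - ((x k : ℕ) : ℤ)) := by omega
    rw [e1, e2, Int.natAbs_mul]
    have h2 : ((2 : ℤ)).natAbs = 2 := rfl
    rw [h2]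
    ring
  rw [hwlen_decomp rfl rfl p0 hlen0, ← hS20]
  ring

lemma uniq_getVert (hℓ : 1 ≤ ℓ) (heven : ∀ k : Fin ℓ, (2 : ℤ) ∣ ((z k : ℤ) - (x k : ℤ)))
    (q : (HGraph b ℓ).Walk ((⟨0, by omega⟩ : Fin (2 * ℓ + 1)), x)
      ((⟨2 * ℓ, by omega⟩ : Fin (2 * ℓ + 1)), z))
    (hqlen : q.length = 2 * ℓ)
    (hq2 : 2 * hwlen q = 2 * (2 * ℓ * (3 * ℓ * (2 ^ b) ^ 2)) +
      ∑ k : Fin ℓ, (((z k : ℕ) : ℤ) - ((x k : ℕ) : ℤ)).natAbs ^ 2) :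
    ∀ t, t ≤ 2 * ℓ → q.getVert t = canonF x z t := by
  have hq0 := q.getVert_zero
  have hqN : q.getVert (2 * ℓ) = ((⟨2 * ℓ, by omega⟩ : Fin (2 * ℓ + 1)), z) := by
    have h := q.getVert_length
    rwa [hqlen] at h
  have hdq := hwlen_decomp rfl rfl q hqlen
  have hle : ∀ k : Fin ℓ,
      (((z k : ℕ) : ℤ) - ((x k : ℕ) : ℤ)).natAbs ^ 2 ≤
        2 * ((cdiff q k (k : ℕ)).natAbs ^ 2 + (cdiff q k (2 * ℓ - 1 - (k : ℕ))).natAbs ^ 2) := by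
    intro k
    have htot : cdiff q k (k : ℕ) + cdiff q k (2 * ℓ - 1 - (k : ℕ)) =
        ((z k : ℕ) : ℤ) - ((x k : ℕ) : ℤ) := cdiff_total rfl rfl q hqlen k
    rw [← htot]
    exact sq_ineq _ _
  have hSq : ∑ k : Fin ℓ, (((z k : ℕ) : ℤ) - ((x k : ℕ) : ℤ)).natAbs ^ 2 =
      ∑ k : Fin ℓ, 2 * ((cdiff q k (k : ℕ)).natAbs ^ 2 +
        (cdiff q k (2 * ℓ - 1 - (k : ℕ))).natAbs ^ 2) := by
    rw [← Finset.mul_sum]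
    omega
  have hpt := (Finset.sum_eq_sum_iff_of_le (fun k _ => hle k)).mp hSq
  have hdd : ∀ k : Fin ℓ, cdiff q k (k : ℕ) = ((midVec x z k : ℕ) : ℤ) - ((x k : ℕ) : ℤ) := by
    intro k
    have htot : cdiff q k (k : ℕ) + cdiff q k (2 * ℓ - 1 - (k : ℕ)) =
        ((z k : ℕ) : ℤ) - ((x k : ℕ) : ℤ) := cdiff_total rfl rfl q hqlen k
    have heq : cdiff q k (k : ℕ) = cdiff q k (2 * ℓ - 1 - (k : ℕ)) := by
      refine sq_eq ?_
      rw [htot]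
      exact hpt k (Finset.mem_univ k)
    have hMk := two_mul_mid x z k (heven k)
    omega
  have hxk : ∀ k : Fin ℓ, ∀ t, t ≤ (k : ℕ) → (q.getVert t).2 k = x k := by
    intro k t ht
    have hkl := k.isLt
    have := coord_const rfl rfl q hqlen k 0 t (by omega) (by omega)
      (fun s h1 h2 hEq => by rw [cidx_eq_iff k.isLt (by omega)] at hEq; omega)
    rw [← this, hq0]
  have hmk : ∀ k : Fin ℓ, ∀ t, (k : ℕ) < t → t ≤ 2 * ℓ - 1 - (k : ℕ) →
      (q.getVert t).2 k = midVec x z k := by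
    intro k t h1 h2
    have hkl := k.isLt
    have hc := coord_const rfl rfl q hqlen k ((k : ℕ) + 1) t (by omega) (by omega)
      (fun s hs1 hs2 hEq => by rw [cidx_eq_iff k.isLt (by omega)] at hEq; omega)
    rw [← hc]
    have hx0 : (q.getVert (k : ℕ)).2 k = x k := hxk k (k : ℕ) le_rfl
    have hd1' := hdd k
    have hcd : cdiff q k (k : ℕ) = (((q.getVert ((k : ℕ) + 1)).2 k : ℕ) : ℤ) -
        (((q.getVert (k : ℕ)).2 k : ℕ) : ℤ) := rfl
    rw [hx0] at hcd
    have hvaleq : (((q.getVert ((k : ℕ) + 1)).2 k : ℕ) : ℤ) = ((midVec x z k : ℕ) : ℤ) := by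
      omega
    exact Fin.ext (by exact_mod_cast hvaleq)
  have hzk : ∀ k : Fin ℓ, ∀ t, 2 * ℓ - (k : ℕ) ≤ t → t ≤ 2 * ℓ →
      (q.getVert t).2 k = z k := by
    intro k t h1 h2
    have hkl := k.isLt
    have := coord_const rfl rfl q hqlen k t (2 * ℓ) (by omega) (by omega)
      (fun s hs1 hs2 hEq => by rw [cidx_eq_iff k.isLt (by omega)] at hEq; omega)
    rw [this, hqN]
  intro t ht
  refine Prod.ext (Fin.ext ?_) ?_
  · rw [walk_levels rfl (by exact rfl) q hqlen t ht]
    show t = min t (2 * ℓ)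
    omega
  · funext k
    have hkl := k.isLt
    rw [canonF_snd x z t ht k]
    by_cases hA : t ≤ (k : ℕ)
    · rw [if_neg (by omega), if_pos (by omega)]
      exact hxk k t hA
    · by_cases hB : t ≤ 2 * ℓ - 1 - (k : ℕ)
      · rw [if_pos (by omega)]
        exact hmk k t (by omega) hB
      · rw [if_neg (by omega), if_neg (by omega)]
        exact hzk k t (by omega) ht

end Aux5


open SimpleGraph in
set_option maxHeartbeats 1000000 in
/-- Every walk from `v_{0,x}` to `v_{2ℓ,z}` on exactly `2ℓ` edges has weighted length at
least `2ℓ·A + (1/2)·∑ (z_k - x_k)²`, and exactly one such walk attains this value: the walk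
whose step from level `i` to `i+1` changes coordinate `c(i)` by exactly
`(z_{c(i)} - x_{c(i)})/2` (hence visiting `posVec x z i` at each level `i`; in particular it
passes through `v_{ℓ,(x+z)/2}`). -/
theorem min_length_two_ell_walk (b ℓ : ℕ) (hb : 1 ≤ b) (hℓ : 1 ≤ ℓ)
    (x z : Fin ℓ → Fin (2 ^ b))
    (heven : ∀ k : Fin ℓ, (2 : ℤ) ∣ ((z k : ℤ) - (x k : ℤ))) :
    (∀ p : (HGraph b ℓ).Walk (⟨0, by omega⟩, x) (⟨2 * ℓ, by omega⟩, z),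
        p.length = 2 * ℓ →
        ((2 * ℓ * (3 * ℓ * (2 ^ b) ^ 2) : ℕ) : ℝ) +
            (1 / 2) * ∑ k : Fin ℓ, (((z k : ℕ) : ℝ) - ((x k : ℕ) : ℝ)) ^ 2 ≤ (hwlen p : ℝ)) ∧
      ∃ p : (HGraph b ℓ).Walk (⟨0, by omega⟩, x) (⟨2 * ℓ, by omega⟩, z),
        (p.length = 2 * ℓ ∧
            (hwlen p : ℝ) = ((2 * ℓ * (3 * ℓ * (2 ^ b) ^ 2) : ℕ) : ℝ) +
              (1 / 2) * ∑ k : Fin ℓ, (((z k : ℕ) : ℝ) - ((x k : ℕ) : ℝ)) ^ 2) ∧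
          (∀ i : Fin (2 * ℓ + 1), (i, posVec x z i) ∈ p.support) ∧
          ((⟨ℓ, by omega⟩ : Fin (2 * ℓ + 1)), midVec x z) ∈ p.support ∧
          ∀ q : (HGraph b ℓ).Walk (⟨0, by omega⟩, x) (⟨2 * ℓ, by omega⟩, z),
            q.length = 2 * ℓ →
            (hwlen q : ℝ) = ((2 * ℓ * (3 * ℓ * (2 ^ b) ^ 2) : ℕ) : ℝ) +
              (1 / 2) * ∑ k : Fin ℓ, (((z k : ℕ) : ℝ) - ((x k : ℕ) : ℝ)) ^ 2 →
            q = p := by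
  set S : ℕ := ∑ k : Fin ℓ, (((z k : ℕ) : ℤ) - ((x k : ℕ) : ℤ)).natAbs ^ 2 with hS
  have hsum : ∑ k : Fin ℓ, (((z k : ℕ) : ℝ) - ((x k : ℕ) : ℝ)) ^ 2 = (S : ℝ) := by
    rw [hS]
    push_cast [Nat.cast_natAbs]
    exact Finset.sum_congr rfl fun k _ => (sq_abs _).symm
  constructor
  · -- lower bound
    intro p hp
    have hd := hwlen_decomp rfl rfl p hp
    have hSle : S ≤ 2 * ∑ k : Fin ℓ,
        ((cdiff p k (k : ℕ)).natAbs ^ 2 + (cdiff p k (2 * ℓ - 1 - (k : ℕ))).natAbs ^ 2) := by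
      rw [hS, Finset.mul_sum]
      refine Finset.sum_le_sum fun k _ => ?_
      have htot : cdiff p k (k : ℕ) + cdiff p k (2 * ℓ - 1 - (k : ℕ)) =
          ((z k : ℕ) : ℤ) - ((x k : ℕ) : ℤ) := cdiff_total rfl rfl p hp k
      rw [← htot]
      exact sq_ineq _ _
    rw [hsum, hd]
    have hcast : (S : ℝ) ≤ 2 * ((∑ k : Fin ℓ,
        ((cdiff p k (k : ℕ)).natAbs ^ 2 + (cdiff p k (2 * ℓ - 1 - (k : ℕ))).natAbs ^ 2) : ℕ) : ℝ) := by
      exact_mod_cast hSle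
    push_cast
    push_cast at hcast
    linarith
  · obtain ⟨p0, hlen0, hgv'⟩ := canonW x z hℓ
    have hw0 : 2 * hwlen p0 = 2 * (2 * ℓ * (3 * ℓ * (2 ^ b) ^ 2)) + S :=
      canon_hwlen x z hℓ heven p0 hlen0 hgv'
    have hval0 : (hwlen p0 : ℝ) = ((2 * ℓ * (3 * ℓ * (2 ^ b) ^ 2) : ℕ) : ℝ) +
        (1 / 2) * ∑ k : Fin ℓ, (((z k : ℕ) : ℝ) - ((x k : ℕ) : ℝ)) ^ 2 := by
      rw [hsum]
      have h2 : ((2 * hwlen p0 : ℕ) : ℝ) = ((2 * (2 * ℓ * (3 * ℓ * (2 ^ b) ^ 2)) + S : ℕ) : ℝ) := by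
        exact_mod_cast congrArg (Nat.cast : ℕ → ℝ) hw0
      push_cast at h2
      push_cast
      linarith
    have hsupp : ∀ i : Fin (2 * ℓ + 1), (i, posVec x z i) ∈ p0.support := by
      intro i
      rw [Walk.mem_support_iff_exists_getVert]
      refine ⟨(i : ℕ), ?_, ?_⟩
      · rw [hgv' (i : ℕ) (by omega), canonF_coe]
      · rw [hlen0]; omega
    refine ⟨p0, ⟨hlen0, hval0⟩, hsupp, ?_, ?_⟩
    · rw [Walk.mem_support_iff_exists_getVert]
      exact ⟨ℓ, by rw [hgv' ℓ (by omega)]; exact canonF_mid x z hℓ, by rw [hlen0]; omega⟩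
    · intro q hqlen hqval
      rw [hsum] at hqval
      have hq2 : 2 * hwlen q = 2 * (2 * ℓ * (3 * ℓ * (2 ^ b) ^ 2)) + S := by
        have h2 : ((2 * hwlen q : ℕ) : ℝ) =
            ((2 * (2 * ℓ * (3 * ℓ * (2 ^ b) ^ 2)) + S : ℕ) : ℝ) := by
          push_cast
          push_cast at hqval
          linarith
        exact_mod_cast h2
      have hqc := uniq_getVert x z hℓ heven q hqlen hq2
      refine walk_ext q p0 (by rw [hqlen, hlen0]) ?_
      intro t
      by_cases ht : t ≤ 2 * ℓ
      · rw [hqc t ht, hgv' t ht]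
      · rw [q.getVert_of_length_le (by omega), p0.getVert_of_length_le (by omega)]
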